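/- Let z₀ ∈ ℂ, R > 0, and let F be a holomorphic function on the disk D(z₀,R). Then ∫_{D(z₀,R)} (Re F(w) − Re F(z₀))² dA(w) ≤ ∫_{D(z₀,R)} (Im F(w))² dA(w), where both sides may be +∞. -/

import Mathlib

open MeasureTheory Metric Complex ENNReal Set
open scoped Real

lemma circle_avg (h : ℂ → ℂ) (ρ : ℝ) (hρ : 0 < ρ)
    (hc : ContinuousOn h (closedBall 0 ρ))
    (hd : ∀ z ∈ ball (0:ℂ) ρ, DifferentiableAt ℂ h z) :
    ∫ θ in (0:ℝ)..(2*π), h (circleMap 0 ρ θ) = (2*π : ℝ) • h 0 := by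
  have key := circleIntegral_sub_center_inv_smul_of_differentiable_on_off_countable hρ
      Set.countable_empty hc (fun z hz => hd z hz.1)
  have h1 : (∮ z in C((0:ℂ), ρ), (z - 0)⁻¹ • h z)
      = I * ∫ θ in (0:ℝ)..(2*π), h (circleMap 0 ρ θ) := by
    rw [circleIntegral]
    rw [← intervalIntegral.integral_const_mul]
    apply intervalIntegral.integral_congr
    intro θ _
    have hne : circleMap 0 ρ θ ≠ 0 := by
      simpa using circleMap_ne_center (ne_of_gt hρ) (c := 0) (θ := θ)
    simp only [deriv_circleMap, smul_eq_mul, sub_zero]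
    field_simp
  rw [h1] at key
  have h2 : I * ∫ θ in (0:ℝ)..(2*π), h (circleMap 0 ρ θ) = I * ((2*π:ℝ) • h 0) :=
    key.trans (by rw [Complex.real_smul, smul_eq_mul]; push_cast; ring)
  exact mul_left_cancel₀ I_ne_zero h2

lemma polar_symm_eq (p : ℝ × ℝ) : Complex.polarCoord.symm p = circleMap 0 p.1 p.2 := by
  simp [circleMap, Complex.exp_mul_I]

lemma disk_mean0 (Rb r : ℝ) (hr : 0 < r) (hrR : r < Rb) (h : ℂ → ℂ)
    (hd : DifferentiableOn ℂ h (ball 0 Rb)) :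
    ∫ w in ball (0:ℂ) r, h w = (π * r^2 : ℝ) • h 0 := by
  have hdAt : ∀ z ∈ ball (0:ℂ) Rb, DifferentiableAt ℂ h z := fun z hz =>
    hd.differentiableAt (isOpen_ball.mem_nhds hz)
  have hc : ContinuousOn h (closedBall 0 r) :=
    (hd.continuousOn).mono (closedBall_subset_ball hrR)
  have hcm : Continuous fun p : ℝ × ℝ => circleMap 0 p.1 p.2 := by
    simp only [circleMap, zero_add]
    fun_prop
  -- the polar integrand
  set g : ℝ × ℝ → ℂ := fun p => p.1 • h (circleMap 0 p.1 p.2) with hg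
  have hgint : IntegrableOn g (Ioo (0:ℝ) r ×ˢ Ioo (-π) π) := by
    apply IntegrableOn.mono_set (t := Icc (0:ℝ) r ×ˢ Icc (-π) π)
    · apply ContinuousOn.integrableOn_compact (isCompact_Icc.prod isCompact_Icc)
      apply ContinuousOn.smul (continuous_fst.continuousOn)
      apply hc.comp hcm.continuousOn
      intro p hp
      simp only [mem_closedBall, dist_zero_right, norm_circleMap_zero]
      rw [_root_.abs_of_nonneg hp.1.1]
      exact hp.1.2
    · exact Set.prod_mono Ioo_subset_Icc_self Ioo_subset_Icc_self
  have h1 : ∫ w in ball (0:ℂ) r, h w = ∫ w, (ball (0:ℂ) r).indicator h w :=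
    (integral_indicator measurableSet_ball).symm
  rw [h1, ← Complex.integral_comp_polarCoord_symm]
  have h2 : ∫ p in polarCoord.target, p.1 • (ball (0:ℂ) r).indicator h (Complex.polarCoord.symm p)
      = ∫ p in Ioo (0:ℝ) r ×ˢ Ioo (-π) π, g p := by
    have hsubset : Ioo (0:ℝ) r ×ˢ Ioo (-π) π ⊆ polarCoord.target := by
      rw [polarCoord_target]; exact Set.prod_mono Ioo_subset_Ioi_self subset_rfl
    rw [← inter_eq_self_of_subset_right hsubset,
      ← setIntegral_indicator (measurableSet_Ioo.prod measurableSet_Ioo)]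
    apply setIntegral_congr_fun (polarCoord.open_target.measurableSet)
    intro p hp
    rw [polarCoord_target] at hp
    have habs : ‖Complex.polarCoord.symm p‖ = p.1 := by
      rw [Complex.norm_polarCoord_symm, abs_of_pos hp.1]
    by_cases hpr : p.1 < r
    · have hm1 : Complex.polarCoord.symm p ∈ ball (0:ℂ) r := by
        simp only [mem_ball, Complex.dist_eq, sub_zero, habs]; exact hpr
      have hm2 : p ∈ Ioo (0:ℝ) r ×ˢ Ioo (-π) π := ⟨⟨hp.1, hpr⟩, hp.2⟩
      rw [polar_symm_eq] at hm1
      simp only [hg, polar_symm_eq, Set.indicator_of_mem hm1, Set.indicator_of_mem hm2]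
    · have hm1 : Complex.polarCoord.symm p ∉ ball (0:ℂ) r := by
        simp only [mem_ball, Complex.dist_eq, sub_zero, habs]; exact hpr
      have hm2 : p ∉ Ioo (0:ℝ) r ×ˢ Ioo (-π) π := fun hmem => hpr hmem.1.2
      rw [polar_symm_eq] at hm1
      simp only [hg, polar_symm_eq, Set.indicator_of_notMem hm1,
        Set.indicator_of_notMem hm2, smul_zero]
  rw [h2, Measure.volume_eq_prod, setIntegral_prod _ (by rwa [← Measure.volume_eq_prod])]
  have h3 : ∀ ρ ∈ Ioo (0:ℝ) r,
      (∫ θ in Ioo (-π) π, g (ρ, θ)) = (2 * π * ρ : ℝ) • h 0 := by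
    intro ρ hρ
    have hcirc : ∫ θ in (0:ℝ)..(2*π), h (circleMap 0 ρ θ) = (2*π : ℝ) • h 0 := by
      apply circle_avg h ρ hρ.1
      · exact hc.mono (closedBall_subset_closedBall hρ.2.le)
      · intro z hz
        exact hdAt z (lt_trans (lt_trans hz hρ.2) hrR)
    have hper : Function.Periodic (fun θ => h (circleMap 0 ρ θ)) (2*π) :=
      (periodic_circleMap 0 ρ).comp h
    have hshift : (∫ θ in (-π)..π, h (circleMap 0 ρ θ))
        = ∫ θ in (0:ℝ)..(2*π), h (circleMap 0 ρ θ) := by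
      simpa [show -π + 2*π = π by ring] using hper.intervalIntegral_add_eq (-π) 0
    calc (∫ θ in Ioo (-π) π, g (ρ, θ))
        = ρ • ∫ θ in Ioo (-π) π, h (circleMap 0 ρ θ) := by
          rw [← integral_smul]
      _ = ρ • ∫ θ in (-π)..π, h (circleMap 0 ρ θ) := by
          rw [intervalIntegral.integral_of_le (by linarith [Real.pi_pos]),
            integral_Ioc_eq_integral_Ioo]
      _ = ρ • ((2*π:ℝ) • h 0) := by rw [hshift, hcirc]
      _ = (2 * π * ρ : ℝ) • h 0 := by rw [smul_smul]; ring_nf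
  rw [setIntegral_congr_fun measurableSet_Ioo h3]
  rw [integral_smul_const]
  have h4 : (∫ ρ in Ioo (0:ℝ) r, (2 * π * ρ : ℝ)) = π * r ^ 2 := by
    rw [← integral_Ioc_eq_integral_Ioo, ← intervalIntegral.integral_of_le hr.le]
    rw [intervalIntegral.integral_const_mul, integral_id]
    ring
  rw [h4]

lemma disk_mean (c : ℂ) (Rb r : ℝ) (hr : 0 < r) (hrR : r < Rb) (h : ℂ → ℂ)
    (hd : DifferentiableOn ℂ h (ball c Rb)) :
    ∫ w in ball c r, h w = (π * r^2 : ℝ) • h c := by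
  have hmp : MeasurePreserving (fun w : ℂ => c + w) volume volume :=
    measurePreserving_add_left volume c
  have hemb : MeasurableEmbedding (fun w : ℂ => c + w) :=
    (Homeomorph.addLeft c).measurableEmbedding
  have hpre : (fun w : ℂ => c + w) ⁻¹' ball c r = ball (0:ℂ) r := by
    ext w
    simp [mem_ball, Complex.dist_eq]
  have htrans : ∫ w in ball c r, h w = ∫ w in ball (0:ℂ) r, h (c + w) := by
    rw [← hmp.setIntegral_preimage_emb hemb h (ball c r), hpre]
  rw [htrans]
  have hd' : DifferentiableOn ℂ (fun w => h (c + w)) (ball (0:ℂ) Rb) := by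
    apply hd.comp ((differentiable_const c).add differentiable_id).differentiableOn
    intro w hw
    simpa [mem_ball, Complex.dist_eq] using hw
  have := disk_mean0 Rb r hr hrR (fun w => h (c + w)) hd'
  rw [this]
  simp

lemma key_ineq (z₀ : ℂ) (R r : ℝ) (hr : 0 < r) (hrR : r < R) (F : ℂ → ℂ)
    (hF : DifferentiableOn ℂ F (ball z₀ R)) :
    (∫⁻ w in ball z₀ r, ENNReal.ofReal (((F w).re - (F z₀).re) ^ 2))
      ≤ ∫⁻ w in ball z₀ r, ENNReal.ofReal ((F w).im ^ 2) := by
  set G : ℂ → ℂ := fun w => F w - ((F z₀).re : ℂ) with hGdef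
  have hG : DifferentiableOn ℂ G (ball z₀ R) := hF.sub (differentiableOn_const _)
  have hGre : ∀ w, (G w).re = (F w).re - (F z₀).re := by intro w; simp [hGdef]
  have hGim : ∀ w, (G w).im = (F w).im := by intro w; simp [hGdef]
  have hG2 : DifferentiableOn ℂ (fun w => (G w) ^ 2) (ball z₀ R) := hG.pow 2
  have hGc : ContinuousOn G (closedBall z₀ r) :=
    hG.continuousOn.mono (closedBall_subset_ball hrR)
  -- integrabilities
  have hcre : ContinuousOn (fun w => ((G w).re) ^ 2) (closedBall z₀ r) :=
    (Complex.continuous_re.comp_continuousOn hGc).pow 2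
  have hcim : ContinuousOn (fun w => ((G w).im) ^ 2) (closedBall z₀ r) :=
    (Complex.continuous_im.comp_continuousOn hGc).pow 2
  have hcsq : ContinuousOn (fun w => ((G w) ^ 2).re) (closedBall z₀ r) :=
    Complex.continuous_re.comp_continuousOn (hGc.pow 2)
  have I1 : IntegrableOn (fun w => ((G w).re) ^ 2) (ball z₀ r) :=
    (hcre.integrableOn_compact (isCompact_closedBall _ _)).mono_set ball_subset_closedBall
  have I2 : IntegrableOn (fun w => ((G w).im) ^ 2) (ball z₀ r) :=
    (hcim.integrableOn_compact (isCompact_closedBall _ _)).mono_set ball_subset_closedBall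
  have I3 : IntegrableOn (fun w => ((G w) ^ 2).re) (ball z₀ r) :=
    (hcsq.integrableOn_compact (isCompact_closedBall _ _)).mono_set ball_subset_closedBall
  have I4 : IntegrableOn (fun w => (G w) ^ 2) (ball z₀ r) :=
    ((hGc.pow 2).integrableOn_compact (isCompact_closedBall _ _)).mono_set ball_subset_closedBall
  -- mean value
  have hmean : ∫ w in ball z₀ r, (G w) ^ 2 = (π * r^2 : ℝ) • (G z₀) ^ 2 :=
    disk_mean z₀ R r hr hrR _ hG2
  have hre0 : (G z₀).re = 0 := by simp [hGdef]
  have hmeanre : ∫ w in ball z₀ r, ((G w) ^ 2).re ≤ 0 := by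
    have := Complex.reCLM.integral_comp_comm I4
    simp only [Complex.reCLM_apply] at this
    rw [this, hmean]
    have : ((π * r^2 : ℝ) • (G z₀) ^ 2).re = (π * r^2) * ((G z₀).re ^ 2 - (G z₀).im ^ 2) := by
      simp [Complex.smul_re, pow_two, Complex.mul_re]
    rw [this, hre0]
    have hπ : (0:ℝ) ≤ π * r ^ 2 := by positivity
    nlinarith [sq_nonneg ((G z₀).im)]
  -- pointwise identity
  have hpt : ∀ w, ((G w).re) ^ 2 = ((G w).im) ^ 2 + ((G w) ^ 2).re := by
    intro w
    simp [pow_two, Complex.mul_re]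
  have hint : ∫ w in ball z₀ r, ((G w).re) ^ 2 ≤ ∫ w in ball z₀ r, ((G w).im) ^ 2 := by
    calc ∫ w in ball z₀ r, ((G w).re) ^ 2
        = ∫ w in ball z₀ r, (((G w).im) ^ 2 + ((G w) ^ 2).re) := by
          apply integral_congr_ae; filter_upwards with w; exact hpt w
      _ = (∫ w in ball z₀ r, ((G w).im) ^ 2) + ∫ w in ball z₀ r, ((G w) ^ 2).re :=
          integral_add I2 I3
      _ ≤ ∫ w in ball z₀ r, ((G w).im) ^ 2 := by linarith
  -- convert to lintegral
  calc (∫⁻ w in ball z₀ r, ENNReal.ofReal (((F w).re - (F z₀).re) ^ 2))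
      = ENNReal.ofReal (∫ w in ball z₀ r, ((G w).re) ^ 2) := by
        rw [ofReal_integral_eq_lintegral_ofReal I1
          (Filter.Eventually.of_forall fun w => sq_nonneg _)]
        apply lintegral_congr fun w => by rw [hGre]
    _ ≤ ENNReal.ofReal (∫ w in ball z₀ r, ((G w).im) ^ 2) := ENNReal.ofReal_le_ofReal hint
    _ = ∫⁻ w in ball z₀ r, ENNReal.ofReal ((F w).im ^ 2) := by
        rw [ofReal_integral_eq_lintegral_ofReal I2
          (Filter.Eventually.of_forall fun w => sq_nonneg _)]
        apply lintegral_congr fun w => by rw [hGim]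

/-- harmonic conjugate `L²` estimate on a disk. -/
theorem stmt17 (z₀ : ℂ) (R : ℝ) (hR : 0 < R) (F : ℂ → ℂ)
    (hF : DifferentiableOn ℂ F (ball z₀ R)) :
    (∫⁻ w in ball z₀ R, ENNReal.ofReal (((F w).re - (F z₀).re) ^ 2))
      ≤ ∫⁻ w in ball z₀ R, ENNReal.ofReal ((F w).im ^ 2) := by
  set g : ℂ → ℝ≥0∞ := fun w => ENNReal.ofReal (((F w).re - (F z₀).re) ^ 2) with hgdef
  set s : ℕ → Set ℂ := fun n => ball z₀ (R - R / (n + 2)) with hsdef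
  have hrpos : ∀ n : ℕ, 0 < R - R / (n + 2) := by
    intro n
    have h1 : R / (n + 2 : ℝ) ≤ R / 2 := by
      apply div_le_div_of_nonneg_left hR.le (by norm_num) (by push_cast; linarith [Nat.cast_nonneg (α := ℝ) n])
    linarith [half_lt_self hR]
  have hrlt : ∀ n : ℕ, R - R / (n + 2) < R := by
    intro n
    have : 0 < R / (n + 2 : ℝ) := by positivity
    linarith
  have hmono : Monotone fun n : ℕ => R - R / (n + 2) := by
    intro m n hmn
    have h2 : (0:ℝ) < m + 2 := by positivity
    have : R / (n + 2 : ℝ) ≤ R / (m + 2 : ℝ) := by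
      apply div_le_div_of_nonneg_left hR.le h2
      have := (Nat.cast_le (α := ℝ)).2 hmn
      push_cast
      linarith
    linarith
  -- pointwise sup of indicators
  have hsup : ∀ w, (ball z₀ R).indicator g w = ⨆ n, (s n).indicator g w := by
    intro w
    by_cases hw : w ∈ ball z₀ R
    · rw [Set.indicator_of_mem hw]
      have hd : dist w z₀ < R := mem_ball.1 hw
      obtain ⟨n, hn⟩ := exists_nat_one_div_lt (ε := (R - dist w z₀) / R) (div_pos (by linarith) hR)
      have hwn : w ∈ s n := by
        rw [hsdef, mem_ball]
        have h1 : R / (n + 2 : ℝ) ≤ R / (n + 1 : ℝ) := by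
          apply div_le_div_of_nonneg_left hR.le (by positivity) (by push_cast; linarith)
        have h2 : R / (n + 1 : ℝ) < R - dist w z₀ := by
          rw [div_lt_div_iff₀ (by positivity) hR] at hn
          rw [div_lt_iff₀ (by positivity)]
          linarith
        linarith
      apply le_antisymm
      · exact le_trans (le_of_eq (Set.indicator_of_mem hwn g).symm) (le_iSup (fun n => (s n).indicator g w) n)
      · apply iSup_le fun n => ?_
        by_cases hwn' : w ∈ s n
        · rw [Set.indicator_of_mem hwn']
        · rw [Set.indicator_of_notMem hwn']; exact zero_le
    · have hwn : ∀ n, w ∉ s n := fun n hn =>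
        hw (ball_subset_ball (hrlt n).le hn)
      rw [Set.indicator_of_notMem hw]
      simp [fun n => Set.indicator_of_notMem (hwn n) g]
  have hsub : ∀ n, s n ⊆ ball z₀ R := fun n => ball_subset_ball (hrlt n).le
  have hmeas : ∀ n, AEMeasurable ((s n).indicator g) volume := by
    intro n
    rw [aemeasurable_indicator_iff measurableSet_ball]
    have hcont : ContinuousOn g (s n) :=
      ENNReal.continuous_ofReal.comp_continuousOn
        (((Complex.continuous_re.comp_continuousOn
          ((hF.continuousOn).mono (hsub n))).sub continuousOn_const).pow 2)
    exact hcont.aemeasurable measurableSet_ball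
  have hmonot : ∀ w, Monotone fun n => (s n).indicator g w := by
    intro w m n hmn
    exact Set.indicator_le_indicator_of_subset (ball_subset_ball (hmono hmn))
      (fun a => zero_le) w
  calc ∫⁻ w in ball z₀ R, g w
      = ∫⁻ w, (ball z₀ R).indicator g w := (lintegral_indicator measurableSet_ball g).symm
    _ = ∫⁻ w, ⨆ n, (s n).indicator g w := lintegral_congr hsup
    _ = ⨆ n, ∫⁻ w, (s n).indicator g w := lintegral_iSup' hmeas (ae_of_all _ hmonot)
    _ = ⨆ n, ∫⁻ w in s n, g w := by
        exact iSup_congr fun n => lintegral_indicator measurableSet_ball g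
    _ ≤ ∫⁻ w in ball z₀ R, ENNReal.ofReal ((F w).im ^ 2) := by
        apply iSup_le fun n => ?_
        exact (key_ineq z₀ R _ (hrpos n) (hrlt n) F hF).trans
          (lintegral_mono_set (hsub n))
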